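/- Let β > 0 and let g : (0, ∞) → ℝ be differentiable. If for every L ≥ 0 the point u = e^{−L/β} is a global minimizer over (0, ∞) of the function u ↦ u·L + β·g(u), then g'(u) = ln u for every u ∈ (0, 1]. -/

import Mathlib

/-- For `β > 0` and `g` differentiable on `(0, ∞)`: if for every `L ≥ 0` the point
`u = e^{−L/β}` is a global minimizer over `(0, ∞)` of `u ↦ u·L + β·g(u)`, then
`g'(u) = ln u` for every `u ∈ (0, 1]`. -/
theorem sebra_regularizer_necessity (β : ℝ) (hβ : 0 < β) (g : ℝ → ℝ)
    (hg : ∀ u : ℝ, 0 < u → DifferentiableAt ℝ g u)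
    (hmin : ∀ L : ℝ, 0 ≤ L → ∀ u : ℝ, 0 < u →
      Real.exp (-L / β) * L + β * g (Real.exp (-L / β)) ≤ u * L + β * g u) :
    ∀ u : ℝ, u ∈ Set.Ioc (0 : ℝ) 1 → deriv g u = Real.log u := by
  intro u ⟨hu0, hu1⟩
  set L : ℝ := -β * Real.log u with hL
  have hlog : Real.log u ≤ 0 := Real.log_nonpos hu0.le hu1
  have hL0 : 0 ≤ L := by
    have := mul_nonneg hβ.le (neg_nonneg.mpr hlog)
    linarith [this]
  have hexp : Real.exp (-L / β) = u := by
    have : -L / β = Real.log u := by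
      field_simp [hL]
      rw [hL]; ring
    rw [this, Real.exp_log hu0]
  -- f has a local min at u
  have hmin' := hmin L hL0
  rw [hexp] at hmin'
  set f : ℝ → ℝ := fun v => v * L + β * g v with hf
  have hloc : IsLocalMin f u := by
    apply Filter.eventually_of_mem (isOpen_Ioi.mem_nhds hu0)
    intro v hv
    exact hmin' v hv
  have hderiv : HasDerivAt f (L + β * deriv g u) u := by
    exact ((hasDerivAt_id u).mul_const L).add (((hg u hu0).hasDerivAt).const_mul β) |>.congr_deriv (by ring)
  have hz : L + β * deriv g u = 0 := by
    have := hloc.hasDerivAt_eq_zero hderiv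
    exact this
  have : deriv g u = -L / β := by
    field_simp at hz ⊢
    linarith
  rw [this, hL]
  field_simp
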